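/- arXiv:2206.09239 — 4 statements merged into one kernel-verified Lean document; each statement's English description precedes it below -/
import Mathlib

section
/- Let n ∈ ℕ, Γ ∈ ℕ, and for each t ∈ Fin n let f_t : ℝ → ℝ be either convex on [0,1] or antitone on [0,1]. Then there exists x* ∈ (Fin n → ℝ) with x*_t ∈ {0,1} for all t and Σ_t x*_t ≤ Γ such that for every x ∈ (Fin n → ℝ) with 0 ≤ x_t ≤ 1 for all t and Σ_t x_t ≤ Γ, one has Σ_t f_t(x_t) ≤ Σ_t f_t(x*_t). -/
lemma sum_comp_update {n : ℕ} (g : Fin n → ℝ → ℝ) (x : Fin n → ℝ) (t0 : Fin n) (u : ℝ) :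
    ∑ t, g t (Function.update x t0 u t) = ∑ t, g t (x t) - g t0 (x t0) + g t0 u := by
  have h1 : (fun t => g t (Function.update x t0 u t))
      = Function.update (fun t => g t (x t)) t0 (g t0 u) := by
    funext t
    rcases eq_or_ne t t0 with rfl | h
    · simp
    · simp [Function.update_of_ne h]
  calc ∑ t, g t (Function.update x t0 u t)
      = ∑ t, Function.update (fun t => g t (x t)) t0 (g t0 u) t := by rw [h1]
    _ = g t0 u + ∑ t ∈ Finset.univ.erase t0, g t (x t) := by
        rw [Finset.sum_update_of_mem (Finset.mem_univ _), Finset.sdiff_singleton_eq_erase]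
    _ = ∑ t, g t (x t) - g t0 (x t0) + g t0 u := by
        rw [← Finset.add_sum_erase _ _ (Finset.mem_univ t0)]; ring

lemma sum_upd {n : ℕ} (x : Fin n → ℝ) (t0 : Fin n) (u : ℝ) :
    ∑ t, Function.update x t0 u t = ∑ t, x t - x t0 + u :=
  sum_comp_update (fun _ r => r) x t0 u

lemma binsum {n : ℕ} (s : Finset (Fin n)) (x : Fin n → ℝ) (hb : ∀ t ∈ s, x t = 0 ∨ x t = 1) :
    ∃ c : ℕ, ∑ t ∈ s, x t = (c : ℝ) := by
  classical
  induction s using Finset.induction with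
  | empty => exact ⟨0, by simp⟩
  | insert _ _ hnot ih =>
    obtain ⟨c, hc⟩ := ih (fun t ht => hb t (Finset.mem_insert_of_mem ht))
    rcases hb _ (Finset.mem_insert_self _ _) with h0 | h1
    · exact ⟨c, by rw [Finset.sum_insert hnot, h0, hc]; ring⟩
    · exact ⟨c + 1, by rw [Finset.sum_insert hnot, h1, hc]; push_cast; ring⟩

set_option maxHeartbeats 2000000 in
open scoped Classical in
lemma key_lemma {n : ℕ} (Γ : ℕ) (f : Fin n → ℝ → ℝ)
    (hf : ∀ t, ConvexOn ℝ (Set.Icc (0 : ℝ) 1) (f t) ∨ AntitoneOn (f t) (Set.Icc (0 : ℝ) 1)) :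
    ∀ k (x : Fin n → ℝ), (∀ t, 0 ≤ x t ∧ x t ≤ 1) → (∑ t, x t ≤ (Γ : ℝ)) →
      (Finset.univ.filter (fun t => x t ≠ 0 ∧ x t ≠ 1)).card = k →
      ∃ y : Fin n → ℝ, (∀ t, y t = 0 ∨ y t = 1) ∧ (∑ t, y t ≤ (Γ : ℝ)) ∧
        ∑ t, f t (x t) ≤ ∑ t, f t (y t) := by
  intro k
  induction k using Nat.strong_induction_on with
  | _ k IH =>
  intro x hbox hsum hcard
  rcases Nat.eq_zero_or_pos k with rfl | hk
  -- base case: x already binary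
  · refine ⟨x, ?_, hsum, le_refl _⟩
    intro t
    by_contra h
    push_neg at h
    have ht : t ∈ Finset.univ.filter (fun t => x t ≠ 0 ∧ x t ≠ 1) := by
      simp [h.1, h.2]
    rw [Finset.card_eq_zero.mp hcard] at ht
    exact absurd ht (Finset.notMem_empty t)
  by_cases hA : ∃ t0, (x t0 ≠ 0 ∧ x t0 ≠ 1) ∧ AntitoneOn (f t0) (Set.Icc (0 : ℝ) 1)
  -- antitone fractional coordinate: set it to 0
  · obtain ⟨t0, hfr, hanti⟩ := hA
    have ht0F : t0 ∈ Finset.univ.filter (fun t => x t ≠ 0 ∧ x t ≠ 1) := by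
      simp [hfr.1, hfr.2]
    set x' := Function.update x t0 0 with hx'
    have hbox' : ∀ t, 0 ≤ x' t ∧ x' t ≤ 1 := by
      intro t; rcases eq_or_ne t t0 with rfl | h
      · simp [hx']
      · simp [hx', Function.update_of_ne h, hbox t]
    have hs' : ∑ t, x' t = ∑ t, x t - x t0 + 0 := sum_upd x t0 0
    have hsum' : ∑ t, x' t ≤ (Γ : ℝ) := by
      rw [hs']; linarith [(hbox t0).1]
    have hFsub : Finset.univ.filter (fun t => x' t ≠ 0 ∧ x' t ≠ 1)
        ⊆ (Finset.univ.filter (fun t => x t ≠ 0 ∧ x t ≠ 1)).erase t0 := by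
      intro t ht
      simp only [Finset.mem_filter, Finset.mem_univ, true_and] at ht
      rcases eq_or_ne t t0 with rfl | h
      · simp [hx'] at ht
      · refine Finset.mem_erase.mpr ⟨h, ?_⟩
        simpa [Finset.mem_filter, hx', Function.update_of_ne h] using ht
    have hlt : (Finset.univ.filter (fun t => x' t ≠ 0 ∧ x' t ≠ 1)).card < k := by
      calc (Finset.univ.filter (fun t => x' t ≠ 0 ∧ x' t ≠ 1)).card
          ≤ ((Finset.univ.filter (fun t => x t ≠ 0 ∧ x t ≠ 1)).erase t0).card :=
            Finset.card_le_card hFsub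
        _ < k := by rw [← hcard]; exact Finset.card_erase_lt_of_mem ht0F
    obtain ⟨y, hy1, hy2, hy3⟩ := IH _ hlt x' hbox' hsum' rfl
    refine ⟨y, hy1, hy2, ?_⟩
    have hval : ∑ t, f t (x' t) = ∑ t, f t (x t) - f t0 (x t0) + f t0 0 :=
      sum_comp_update f x t0 0
    have hmono : f t0 (x t0) ≤ f t0 0 :=
      hanti (Set.mem_Icc.mpr ⟨le_refl 0, zero_le_one⟩) (Set.mem_Icc.mpr (hbox t0)) (hbox t0).1
    calc ∑ t, f t (x t) ≤ ∑ t, f t (x' t) := by rw [hval]; linarith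
      _ ≤ _ := hy3
  -- no antitone fractional coordinate: all fractional coordinates convex
  · push_neg at hA
    have hconv : ∀ t, x t ≠ 0 → x t ≠ 1 → ConvexOn ℝ (Set.Icc (0 : ℝ) 1) (f t) := by
      intro t h0 h1
      exact (hf t).resolve_right (hA t ⟨h0, h1⟩)
    have hne : (Finset.univ.filter (fun t => x t ≠ 0 ∧ x t ≠ 1)).Nonempty := by
      rw [← Finset.card_pos, hcard]; exact hk
    obtain ⟨t0, ht0F⟩ := hne
    have hfr0 : x t0 ≠ 0 ∧ x t0 ≠ 1 := by
      simpa using ht0F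
    have ha0 : 0 < x t0 := lt_of_le_of_ne (hbox t0).1 (Ne.symm hfr0.1)
    have ha1 : x t0 < 1 := lt_of_le_of_ne (hbox t0).2 hfr0.2
    by_cases h2 : ∃ t1, (x t1 ≠ 0 ∧ x t1 ≠ 1) ∧ t1 ≠ t0
    · -- two fractional coordinates: exchange argument
      obtain ⟨t1, hfr1, hne10⟩ := h2
      have ht1F : t1 ∈ Finset.univ.filter (fun t => x t ≠ 0 ∧ x t ≠ 1) := by
        simp [hfr1.1, hfr1.2]
      have hb0 : 0 < x t1 := lt_of_le_of_ne (hbox t1).1 (Ne.symm hfr1.1)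
      have hb1 : x t1 < 1 := lt_of_le_of_ne (hbox t1).2 hfr1.2
      set a := x t0 with hadef
      set b := x t1 with hbdef
      set dp := min (1 - a) b with hdp
      set dm := min a (1 - b) with hdm
      have hdp0 : 0 < dp := lt_min (by linarith) hb0
      have hdm0 : 0 < dm := lt_min ha0 (by linarith)
      set lam := dp / (dp + dm) with hlam
      have hS : 0 < dp + dm := by linarith
      have hlam0 : 0 ≤ lam := div_nonneg hdp0.le hS.le
      have hlam1 : lam ≤ 1 := by
        rw [hlam, div_le_one hS]; linarith
      have hlamS : lam * (dp + dm) = dp := div_mul_cancel₀ _ hS.ne'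
      set xp := Function.update (Function.update x t0 (a + dp)) t1 (b - dp) with hxp
      set xm := Function.update (Function.update x t0 (a - dm)) t1 (b + dm) with hxm
      have hxpt0 : xp t0 = a + dp := by
        rw [hxp, Function.update_of_ne (Ne.symm hne10), Function.update_self]
      have hxpt1 : xp t1 = b - dp := by rw [hxp, Function.update_self]
      have hxmt0 : xm t0 = a - dm := by
        rw [hxm, Function.update_of_ne (Ne.symm hne10), Function.update_self]
      have hxmt1 : xm t1 = b + dm := by rw [hxm, Function.update_self]
      have hxpo : ∀ t, t ≠ t0 → t ≠ t1 → xp t = x t := by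
        intro t h0 h1
        rw [hxp, Function.update_of_ne h1, Function.update_of_ne h0]
      have hxmo : ∀ t, t ≠ t0 → t ≠ t1 → xm t = x t := by
        intro t h0 h1
        rw [hxm, Function.update_of_ne h1, Function.update_of_ne h0]
      have hdp_le1 : dp ≤ 1 - a := min_le_left _ _
      have hdp_le2 : dp ≤ b := min_le_right _ _
      have hdm_le1 : dm ≤ a := min_le_left _ _
      have hdm_le2 : dm ≤ 1 - b := min_le_right _ _
      have hboxp : ∀ t, 0 ≤ xp t ∧ xp t ≤ 1 := by
        intro t
        rcases eq_or_ne t t0 with rfl | h0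
        · rw [hxpt0]; constructor <;> linarith
        rcases eq_or_ne t t1 with rfl | h1
        · rw [hxpt1]; constructor <;> linarith
        · rw [hxpo t h0 h1]; exact hbox t
      have hboxm : ∀ t, 0 ≤ xm t ∧ xm t ≤ 1 := by
        intro t
        rcases eq_or_ne t t0 with rfl | h0
        · rw [hxmt0]; constructor <;> linarith
        rcases eq_or_ne t t1 with rfl | h1
        · rw [hxmt1]; constructor <;> linarith
        · rw [hxmo t h0 h1]; exact hbox t
      -- sums are preserved
      have hsp : ∑ t, xp t = ∑ t, x t := by
        have e1 : ∑ t, xp t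
            = ∑ t, Function.update x t0 (a + dp) t - Function.update x t0 (a + dp) t1 + (b - dp) :=
          sum_upd _ t1 _
        rw [e1, Function.update_of_ne hne10, sum_upd x t0 (a + dp), ← hadef, ← hbdef]
        ring
      have hsm : ∑ t, xm t = ∑ t, x t := by
        have e1 : ∑ t, xm t
            = ∑ t, Function.update x t0 (a - dm) t - Function.update x t0 (a - dm) t1 + (b + dm) :=
          sum_upd _ t1 _
        rw [e1, Function.update_of_ne hne10, sum_upd x t0 (a - dm), ← hadef, ← hbdef]
        ring
      -- value decompositions
      have hvp : ∑ t, f t (xp t)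
          = ∑ t, f t (x t) - f t0 a - f t1 b + f t0 (a + dp) + f t1 (b - dp) := by
        have e1 : ∑ t, f t (xp t)
            = ∑ t, f t (Function.update x t0 (a + dp) t)
              - f t1 (Function.update x t0 (a + dp) t1) + f t1 (b - dp) :=
          sum_comp_update f _ t1 _
        rw [e1, Function.update_of_ne hne10, sum_comp_update f x t0 (a + dp), ← hadef, ← hbdef]
        ring
      have hvm : ∑ t, f t (xm t)
          = ∑ t, f t (x t) - f t0 a - f t1 b + f t0 (a - dm) + f t1 (b + dm) := by
        have e1 : ∑ t, f t (xm t)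
            = ∑ t, f t (Function.update x t0 (a - dm) t)
              - f t1 (Function.update x t0 (a - dm) t1) + f t1 (b + dm) :=
          sum_comp_update f _ t1 _
        rw [e1, Function.update_of_ne hne10, sum_comp_update f x t0 (a - dm), ← hadef, ← hbdef]
        ring
      -- convexity inequalities
      have hc0 := hconv t0 hfr0.1 hfr0.2
      have hc1 := hconv t1 hfr1.1 hfr1.2
      have hmem0m : a - dm ∈ Set.Icc (0 : ℝ) 1 := Set.mem_Icc.mpr ⟨by linarith, by linarith⟩
      have hmem0p : a + dp ∈ Set.Icc (0 : ℝ) 1 := Set.mem_Icc.mpr ⟨by linarith, by linarith⟩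
      have hmem1m : b + dm ∈ Set.Icc (0 : ℝ) 1 := Set.mem_Icc.mpr ⟨by linarith, by linarith⟩
      have hmem1p : b - dp ∈ Set.Icc (0 : ℝ) 1 := Set.mem_Icc.mpr ⟨by linarith, by linarith⟩
      have hcomb0 : lam * (a - dm) + (1 - lam) * (a + dp) = a := by nlinarith [hlamS]
      have hcomb1 : lam * (b + dm) + (1 - lam) * (b - dp) = b := by nlinarith [hlamS]
      have h1lam : (0:ℝ) ≤ 1 - lam := by linarith
      have hsum1 : lam + (1 - lam) = 1 := by ring
      have hfa : f t0 a ≤ lam * f t0 (a - dm) + (1 - lam) * f t0 (a + dp) := by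
        have := hc0.2 hmem0m hmem0p hlam0 h1lam hsum1
        simpa [smul_eq_mul, hcomb0] using this
      have hfb : f t1 b ≤ lam * f t1 (b + dm) + (1 - lam) * f t1 (b - dp) := by
        have := hc1.2 hmem1m hmem1p hlam0 h1lam hsum1
        simpa [smul_eq_mul, hcomb1] using this
      -- Σ f(x) ≤ lam Σ f(xm) + (1-lam) Σ f(xp)
      have hmix : ∑ t, f t (x t)
          ≤ lam * ∑ t, f t (xm t) + (1 - lam) * ∑ t, f t (xp t) := by
        rw [hvm, hvp]; nlinarith [hfa, hfb]
      -- card decreases for xp and xm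
      have hsubp : Finset.univ.filter (fun t => xp t ≠ 0 ∧ xp t ≠ 1)
          ⊆ Finset.univ.filter (fun t => x t ≠ 0 ∧ x t ≠ 1) := by
        intro t ht
        rcases eq_or_ne t t0 with rfl | h0
        · exact ht0F
        rcases eq_or_ne t t1 with rfl | h1
        · exact ht1F
        · simp only [Finset.mem_filter, Finset.mem_univ, true_and] at ht ⊢
          rwa [hxpo t h0 h1] at ht
      have hsubm : Finset.univ.filter (fun t => xm t ≠ 0 ∧ xm t ≠ 1)
          ⊆ Finset.univ.filter (fun t => x t ≠ 0 ∧ x t ≠ 1) := by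
        intro t ht
        rcases eq_or_ne t t0 with rfl | h0
        · exact ht0F
        rcases eq_or_ne t t1 with rfl | h1
        · exact ht1F
        · simp only [Finset.mem_filter, Finset.mem_univ, true_and] at ht ⊢
          rwa [hxmo t h0 h1] at ht
      have hltp : (Finset.univ.filter (fun t => xp t ≠ 0 ∧ xp t ≠ 1)).card < k := by
        rw [← hcard]
        apply Finset.card_lt_card
        rw [Finset.ssubset_iff_of_subset hsubp]
        rcases le_total (1 - a) b with h | h
        · refine ⟨t0, ht0F, ?_⟩
          simp only [Finset.mem_filter, Finset.mem_univ, true_and, not_and_or, not_not]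
          right
          rw [hxpt0, hdp, min_eq_left h]; ring
        · refine ⟨t1, ht1F, ?_⟩
          simp only [Finset.mem_filter, Finset.mem_univ, true_and, not_and_or, not_not]
          left
          rw [hxpt1, hdp, min_eq_right h]; ring
      have hltm : (Finset.univ.filter (fun t => xm t ≠ 0 ∧ xm t ≠ 1)).card < k := by
        rw [← hcard]
        apply Finset.card_lt_card
        rw [Finset.ssubset_iff_of_subset hsubm]
        rcases le_total a (1 - b) with h | h
        · refine ⟨t0, ht0F, ?_⟩
          simp only [Finset.mem_filter, Finset.mem_univ, true_and, not_and_or, not_not]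
          left
          rw [hxmt0, hdm, min_eq_left h]; ring
        · refine ⟨t1, ht1F, ?_⟩
          simp only [Finset.mem_filter, Finset.mem_univ, true_and, not_and_or, not_not]
          right
          rw [hxmt1, hdm, min_eq_right h]; ring
      obtain ⟨ym, hym1, hym2, hym3⟩ := IH _ hltm xm hboxm (by rw [hsm]; exact hsum) rfl
      obtain ⟨yp, hyp1, hyp2, hyp3⟩ := IH _ hltp xp hboxp (by rw [hsp]; exact hsum) rfl
      rcases le_total (∑ t, f t (ym t)) (∑ t, f t (yp t)) with hle | hle
      · refine ⟨yp, hyp1, hyp2, ?_⟩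
        have h1 : ∑ t, f t (xm t) ≤ ∑ t, f t (yp t) := le_trans hym3 hle
        nlinarith [hmix, mul_le_mul_of_nonneg_left h1 hlam0,
          mul_le_mul_of_nonneg_left hyp3 (by linarith : (0:ℝ) ≤ 1 - lam)]
      · refine ⟨ym, hym1, hym2, ?_⟩
        have h1 : ∑ t, f t (xp t) ≤ ∑ t, f t (ym t) := le_trans hyp3 hle
        nlinarith [hmix, mul_le_mul_of_nonneg_left h1 (by linarith : (0:ℝ) ≤ 1 - lam),
          mul_le_mul_of_nonneg_left hym3 hlam0]
    · -- exactly one fractional coordinate t0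
      push_neg at h2
      have hbint : ∀ t ∈ Finset.univ.erase t0, x t = 0 ∨ x t = 1 := by
        intro t ht
        have htne : t ≠ t0 := (Finset.mem_erase.mp ht).1
        by_contra h
        push_neg at h
        exact htne (h2 t h)
      obtain ⟨c, hc⟩ := binsum (Finset.univ.erase t0) x hbint
      have hdecomp : ∑ t, x t = x t0 + ∑ t ∈ Finset.univ.erase t0, x t :=
        (Finset.add_sum_erase _ _ (Finset.mem_univ t0)).symm
      have hcΓ : (c : ℝ) < (Γ : ℝ) := by
        rw [hdecomp, hc] at hsum; linarith
      have hc1Γ : (c : ℝ) + 1 ≤ (Γ : ℝ) := by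
        have : c < Γ := by exact_mod_cast hcΓ
        exact_mod_cast this
      -- the two candidates
      have hc0 := hconv t0 hfr0.1 hfr0.2
      have hmax : f t0 (x t0) ≤ (1 - x t0) * f t0 0 + x t0 * f t0 1 := by
        have := hc0.2 (Set.mem_Icc.mpr ⟨le_refl (0:ℝ), zero_le_one⟩)
          (Set.mem_Icc.mpr ⟨zero_le_one, le_refl (1:ℝ)⟩)
          (by linarith : (0:ℝ) ≤ 1 - x t0) ha0.le (by ring)
        simpa [smul_eq_mul] using this
      have hbin0 : ∀ t, Function.update x t0 (0:ℝ) t = 0 ∨ Function.update x t0 (0:ℝ) t = 1 := by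
        intro t
        rcases eq_or_ne t t0 with rfl | h
        · left; simp
        · rw [Function.update_of_ne h]
          exact hbint t (Finset.mem_erase.mpr ⟨h, Finset.mem_univ t⟩)
      have hbin1 : ∀ t, Function.update x t0 (1:ℝ) t = 0 ∨ Function.update x t0 (1:ℝ) t = 1 := by
        intro t
        rcases eq_or_ne t t0 with rfl | h
        · right; simp
        · rw [Function.update_of_ne h]
          exact hbint t (Finset.mem_erase.mpr ⟨h, Finset.mem_univ t⟩)
      have hs0 : ∑ t, Function.update x t0 (0:ℝ) t ≤ (Γ : ℝ) := by
        rw [sum_upd x t0 0, hdecomp, hc]; linarith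
      have hs1 : ∑ t, Function.update x t0 (1:ℝ) t ≤ (Γ : ℝ) := by
        rw [sum_upd x t0 1, hdecomp, hc]; linarith
      have hv0 : ∑ t, f t (Function.update x t0 (0:ℝ) t)
          = ∑ t, f t (x t) - f t0 (x t0) + f t0 0 := sum_comp_update f x t0 0
      have hv1 : ∑ t, f t (Function.update x t0 (1:ℝ) t)
          = ∑ t, f t (x t) - f t0 (x t0) + f t0 1 := sum_comp_update f x t0 1
      rcases le_total (f t0 0) (f t0 1) with h | h
      · refine ⟨Function.update x t0 1, hbin1, hs1, ?_⟩
        rw [hv1]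
        nlinarith [hmax, mul_le_mul_of_nonneg_left h (by linarith : (0:ℝ) ≤ 1 - x t0)]
      · refine ⟨Function.update x t0 0, hbin0, hs0, ?_⟩
        rw [hv0]
        nlinarith [hmax, mul_le_mul_of_nonneg_left h (ha0.le)]


/-- Separable maximization over the budgeted box: if each f_t is convex or antitone
on [0,1], the maximum of Σ_t f_t(x_t) over {x ∈ [0,1]^n : Σ x_t ≤ Γ} (integer Γ) is
attained at a binary vector. -/
theorem stmt_10 (n Γ : ℕ) (f : Fin n → ℝ → ℝ)
    (hf : ∀ t, ConvexOn ℝ (Set.Icc (0 : ℝ) 1) (f t) ∨ AntitoneOn (f t) (Set.Icc (0 : ℝ) 1)) :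
    ∃ xstar : Fin n → ℝ, (∀ t, xstar t = 0 ∨ xstar t = 1) ∧ (∑ t, xstar t ≤ (Γ : ℝ)) ∧
      ∀ x : Fin n → ℝ, (∀ t, 0 ≤ x t ∧ x t ≤ 1) → (∑ t, x t ≤ (Γ : ℝ)) →
        ∑ t, f t (x t) ≤ ∑ t, f t (xstar t) := by
  classical
  set val : (Fin n → Bool) → (Fin n → ℝ) := fun b t => if b t then 1 else 0 with hval
  set T : Finset (Fin n → Bool) :=
    Finset.univ.filter (fun b => ∑ t, val b t ≤ (Γ : ℝ)) with hT
  have hTne : T.Nonempty := by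
    refine ⟨fun _ => false, ?_⟩
    simp [hT, hval]
  obtain ⟨b, hbT, hbmax⟩ := T.exists_max_image (fun b => ∑ t, f t (val b t)) hTne
  have hbsum : ∑ t, val b t ≤ (Γ : ℝ) := by
    have := Finset.mem_filter.mp hbT
    exact this.2
  refine ⟨val b, fun t => ?_, hbsum, fun x hbox hsum => ?_⟩
  · by_cases h : b t <;> simp [hval, h]
  · obtain ⟨y, hy1, hy2, hy3⟩ := key_lemma Γ f hf _ x hbox hsum rfl
    set b' : Fin n → Bool := fun t => decide (y t = 1) with hb'
    have hvb' : val b' = y := by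
      funext t
      rcases hy1 t with h0 | h1
      · simp [hval, hb', h0]
      · simp [hval, hb', h1]
    have hb'T : b' ∈ T := by
      rw [hT, Finset.mem_filter, hvb']
      exact ⟨Finset.mem_univ _, hy2⟩
    calc ∑ t, f t (x t) ≤ ∑ t, f t (y t) := hy3
      _ = ∑ t, f t (val b' t) := by rw [hvb']
      _ ≤ ∑ t, f t (val b t) := hbmax b' hb'T
end

section
/- Fix T ∈ ℕ and integer budgets Γ^A, Γ^D ∈ ℕ. Let A̲, ΔA : Fin T → ℝ satisfy ΔA_t ≥ 0 and A̲_t + ΔA_t < 360 for all t. Define 𝔸^R := {(α,γ) : 0 ≤ α_t ≤ 1 and 0 ≤ γ_t ≤ 1 for all t, Σ_t α_t ≤ Γ^A, Σ_t γ_t ≤ Γ^D} and 𝔸^{RB} := {(α,γ) ∈ 𝔸^R : every α_t and γ_t equals 0 or 1}. Let D be a nonempty set, Ξ : D → ℝ, and Φ, Ψ : D → (Fin T → ℝ). Define Obj(d, α, γ) := Ξ(d) + Σ_t (γ_t·Φ(d)_t + Ψ(d)_t) / (1.2 − (A̲_t + α_t·ΔA_t)/300). If the set {Obj(d,α,γ)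 : d ∈ D, (α,γ) ∈ 𝔸^R} is bounded above, then sup{Obj(d,α,γ) : d ∈ D, (α,γ) ∈ 𝔸^R} = sup{Obj(d,α,γ) : d ∈ D, (α,γ) ∈ 𝔸^{RB}}. -/
open Finset

/-- The relaxed uncertainty set 𝔸^R (no correlation constraint). -/
def inAR (T ΓA ΓD : ℕ) (p : (Fin T → ℝ) × (Fin T → ℝ)) : Prop :=
  (∀ t, 0 ≤ p.1 t ∧ p.1 t ≤ 1) ∧ (∀ t, 0 ≤ p.2 t ∧ p.2 t ≤ 1) ∧
  (∑ t, p.1 t ≤ (ΓA : ℝ)) ∧ (∑ t, p.2 t ≤ (ΓD : ℝ))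

/-- The binary restriction 𝔸^{RB} of 𝔸^R. -/
def inARB (T ΓA ΓD : ℕ) (p : (Fin T → ℝ) × (Fin T → ℝ)) : Prop :=
  inAR T ΓA ΓD p ∧ (∀ t, p.1 t = 0 ∨ p.1 t = 1) ∧ (∀ t, p.2 t = 0 ∨ p.2 t = 1)

/-- An affine function is convex on `[0,1]`. -/
lemma convexOn_affine_aux (m k : ℝ) :
    ConvexOn ℝ (Set.Icc (0:ℝ) 1) (fun u => u * m + k) := by
  refine ⟨convex_Icc _ _, ?_⟩
  intro x _ y _ p q hp hq hpq
  simp only [smul_eq_mul]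
  have h : (p * x + q * y) * m + k = p * (x * m + k) + q * (y * m + k) := by
    linear_combination (-k) * hpq
  exact h.le

/-- `u ↦ c / (A - u * B)` is convex on `[0,1]` when `c ≥ 0`, `B ≥ 0`, `A - B > 0`. -/
lemma convexOn_div_affine_aux (c A B : ℝ) (hc : 0 ≤ c) (hB : 0 ≤ B) (hpos : 0 < A - B) :
    ConvexOn ℝ (Set.Icc (0:ℝ) 1) (fun u => c / (A - u * B)) := by
  have hden : ∀ u : ℝ, u ∈ Set.Icc (0:ℝ) 1 → 0 < A - u * B := by
    intro u hu
    have : u * B ≤ 1 * B := mul_le_mul_of_nonneg_right hu.2 hB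
    simp at this; nlinarith
  refine ⟨convex_Icc _ _, ?_⟩
  intro x hx y hy p q hp hq hpq
  simp only [smul_eq_mul]
  set P := A - x * B with hP
  set Q := A - y * B with hQ
  have hPp : 0 < P := hden x hx
  have hQp : 0 < Q := hden y hy
  have hdenc : A - (p * x + q * y) * B = p * P + q * Q := by
    rw [hP, hQ]; linear_combination A * hpq.symm
  rw [hdenc]
  have hpq0 : 0 < p * P + q * Q := by
    rcases lt_or_eq_of_le hp with h | h
    · nlinarith [mul_pos h hPp, mul_nonneg hq hQp.le]
    · have hq1 : q = 1 := by linarith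
      rw [← h, hq1]; simpa using hQp
  have e : p * (c / P) + q * (c / Q) = (p * Q + q * P) * c / (P * Q) := by
    field_simp
  rw [e, div_le_div_iff₀ hpq0 (by positivity)]
  rw [show q = 1 - p from by linarith]
  nlinarith [mul_nonneg (mul_nonneg (mul_nonneg hc hp)
    (by linarith : (0:ℝ) ≤ 1 - p)) (sq_nonneg (P - Q))]

/-- `u ↦ c / (A - u * B)` is decreasing-to-0 for negative c: value at u ≤ value at 0. -/
lemma neg_coeff_aux (c A B u : ℝ) (hc : c < 0) (hB : 0 ≤ B) (hpos : 0 < A - B)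
    (hu0 : 0 ≤ u) (hu1 : u ≤ 1) :
    c / (A - u * B) ≤ c / (A - 0 * B) := by
  have h1 : 0 < A - u * B := by nlinarith
  have h2 : 0 < A - 0 * B := by nlinarith
  rw [div_le_div_iff₀ h1 h2]
  nlinarith [mul_nonneg hu0 hB]

/-- Finishing step for the exchange argument: given a modified pair `(va, vb)` at
coordinates `s ≠ t` with the same sum, at least one endpoint binary, and no worse
objective, we can recurse. -/
lemma exchange_finish {T : ℕ} (Γ : ℕ) (g : Fin T → ℝ → ℝ) (n : ℕ)
    (ih : ∀ x : Fin T → ℝ,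
      (univ.filter (fun t => x t ≠ 0 ∧ x t ≠ 1)).card ≤ n →
      (∀ t, 0 ≤ x t ∧ x t ≤ 1) → ∑ t, x t ≤ (Γ : ℝ) →
      ∃ y : Fin T → ℝ, (∀ t, y t = 0 ∨ y t = 1) ∧ ∑ t, y t ≤ (Γ : ℝ) ∧
        ∑ t, g t (x t) ≤ ∑ t, g t (y t))
    (x : Fin T → ℝ) (hx : ∀ t, 0 ≤ x t ∧ x t ≤ 1) (hsum : ∑ t, x t ≤ (Γ : ℝ))
    (hcard : (univ.filter (fun t => x t ≠ 0 ∧ x t ≠ 1)).card ≤ n + 1)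
    (s t : Fin T) (hst : s ≠ t)
    (hsm : x s ≠ 0 ∧ x s ≠ 1) (htm : x t ≠ 0 ∧ x t ≠ 1)
    (va vb : ℝ) (hva : 0 ≤ va ∧ va ≤ 1) (hvb : 0 ≤ vb ∧ vb ≤ 1)
    (hsumv : va + vb = x s + x t)
    (hbinv : (va = 0 ∨ va = 1) ∨ (vb = 0 ∨ vb = 1))
    (hineq : g s (x s) + g t (x t) ≤ g s va + g t vb) :
    ∃ y : Fin T → ℝ, (∀ t, y t = 0 ∨ y t = 1) ∧ ∑ t, y t ≤ (Γ : ℝ) ∧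
      ∑ t, g t (x t) ≤ ∑ t, g t (y t) := by
  classical
  set z : Fin T → ℝ := Function.update (Function.update x s va) t vb with hz
  have hzs : z s = va := by
    rw [hz, Function.update_of_ne hst, Function.update_self]
  have hzt : z t = vb := by rw [hz, Function.update_self]
  have hzu : ∀ u, u ≠ s → u ≠ t → z u = x u := by
    intro u hus hut
    rw [hz, Function.update_of_ne hut, Function.update_of_ne hus]
  have hsmem : s ∈ univ.erase t := Finset.mem_erase.mpr ⟨hst, mem_univ s⟩
  -- generic splitting of sums at coordinates s and t
  have hsplit : ∀ v : Fin T → ℝ, ∀ f : Fin T → ℝ → ℝ,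
      ∑ u, f u (v u) =
        f s (v s) + f t (v t) + ∑ u ∈ (univ.erase t).erase s, f u (v u) := by
    intro v f
    rw [← Finset.sum_erase_add _ _ (mem_univ t),
        ← Finset.sum_erase_add _ _ hsmem]
    ring
  have hrest : ∀ f : Fin T → ℝ → ℝ,
      ∑ u ∈ (univ.erase t).erase s, f u (z u) =
        ∑ u ∈ (univ.erase t).erase s, f u (x u) := by
    intro f
    refine Finset.sum_congr rfl fun u hu => ?_
    have hu1 : u ≠ s := (Finset.mem_erase.mp hu).1
    have hu2 : u ≠ t := (Finset.mem_erase.mp ((Finset.mem_erase.mp hu).2)).1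
    rw [hzu u hu1 hu2]
  have hxz : ∀ u, 0 ≤ z u ∧ z u ≤ 1 := by
    intro u
    by_cases hu1 : u = s
    · subst hu1; rw [hzs]; exact hva
    by_cases hu2 : u = t
    · subst hu2; rw [hzt]; exact hvb
    · rw [hzu u hu1 hu2]; exact hx u
  have hzsum : ∑ u, z u ≤ (Γ : ℝ) := by
    have e1 := hsplit z (fun _ r => r)
    have e2 := hsplit x (fun _ r => r)
    have e3 := hrest (fun _ r => r)
    rw [e1, hzs, hzt, e3]
    rw [e2] at hsum
    linarith
  -- the binary coordinate
  obtain ⟨w', hw'st, hw'bin⟩ : ∃ w', (w' = s ∨ w' = t) ∧ (z w' = 0 ∨ z w' = 1) := by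
    rcases hbinv with h | h
    · exact ⟨s, Or.inl rfl, by rw [hzs]; exact h⟩
    · exact ⟨t, Or.inr rfl, by rw [hzt]; exact h⟩
  have hw'F : w' ∈ univ.filter (fun u => x u ≠ 0 ∧ x u ≠ 1) := by
    rcases hw'st with h | h <;> subst h <;>
      exact mem_filter.mpr ⟨mem_univ _, by assumption⟩
  have hsubset : univ.filter (fun u => z u ≠ 0 ∧ z u ≠ 1) ⊆
      (univ.filter (fun u => x u ≠ 0 ∧ x u ≠ 1)).erase w' := by
    intro u hu
    have hu' := (mem_filter.mp hu).2
    refine Finset.mem_erase.mpr ⟨?_, ?_⟩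
    · rintro rfl
      rcases hw'bin with h | h
      · exact hu'.1 h
      · exact hu'.2 h
    · refine mem_filter.mpr ⟨mem_univ _, ?_⟩
      by_cases hu1 : u = s
      · subst hu1; exact hsm
      by_cases hu2 : u = t
      · subst hu2; exact htm
      · rwa [hzu u hu1 hu2] at hu'
  have hzcard : (univ.filter (fun u => z u ≠ 0 ∧ z u ≠ 1)).card ≤ n := by
    have h1 := Finset.card_le_card hsubset
    rw [Finset.card_erase_of_mem hw'F] at h1
    have h2 : 1 ≤ (univ.filter (fun u => x u ≠ 0 ∧ x u ≠ 1)).card :=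
      Finset.card_pos.mpr ⟨w', hw'F⟩
    omega
  obtain ⟨y, hy1, hy2, hy3⟩ := ih z hzcard hxz hzsum
  refine ⟨y, hy1, hy2, le_trans ?_ hy3⟩
  rw [hsplit z g, hsplit x g, hzs, hzt, hrest g]
  linarith

/-- The key rounding lemma: a separable coordinatewise-convex function on the
    box-with-budget polytope is dominated at some binary point. -/
lemma round_lemma {T : ℕ} (Γ : ℕ) (g : Fin T → ℝ → ℝ)
    (hg : ∀ t, ConvexOn ℝ (Set.Icc (0:ℝ) 1) (g t)) :
    ∀ (n : ℕ) (x : Fin T → ℝ),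
      (univ.filter (fun t => x t ≠ 0 ∧ x t ≠ 1)).card ≤ n →
      (∀ t, 0 ≤ x t ∧ x t ≤ 1) → ∑ t, x t ≤ (Γ : ℝ) →
      ∃ y : Fin T → ℝ, (∀ t, y t = 0 ∨ y t = 1) ∧ ∑ t, y t ≤ (Γ : ℝ) ∧
        ∑ t, g t (x t) ≤ ∑ t, g t (y t) := by
  intro n
  induction n with
  | zero =>
    intro x hcard hx hsum
    refine ⟨x, fun t => ?_, hsum, le_refl _⟩
    by_contra hc
    push_neg at hc
    have ht : t ∈ univ.filter (fun t => x t ≠ 0 ∧ x t ≠ 1) :=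
      mem_filter.mpr ⟨mem_univ _, hc⟩
    have := Finset.card_pos.mpr ⟨t, ht⟩
    omega
  | succ n ih =>
    intro x hcard hx hsum
    by_cases hFe : (univ.filter (fun t => x t ≠ 0 ∧ x t ≠ 1)) = ∅
    · refine ⟨x, fun t => ?_, hsum, le_refl _⟩
      by_contra hc
      push_neg at hc
      have ht : t ∈ univ.filter (fun t => x t ≠ 0 ∧ x t ≠ 1) :=
        mem_filter.mpr ⟨mem_univ _, hc⟩
      simp [hFe] at ht
    obtain ⟨t, htF⟩ := Finset.nonempty_iff_ne_empty.mpr hFe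
    have htm := (mem_filter.mp htF).2
    have hbt0 : 0 < x t := lt_of_le_of_ne (hx t).1 (Ne.symm htm.1)
    have hbt1 : x t < 1 := lt_of_le_of_ne (hx t).2 htm.2
    by_cases hsingle : ∀ s ∈ univ.filter (fun t => x t ≠ 0 ∧ x t ≠ 1), s = t
    · -- exactly one fractional coordinate
      have hbin : ∀ s, s ≠ t → (x s = 0 ∨ x s = 1) := by
        intro s hs
        by_contra hc
        push_neg at hc
        exact hs (hsingle s (mem_filter.mpr ⟨mem_univ _, hc⟩))
      have hS : ∑ s ∈ univ.erase t, x s =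
          (((univ.erase t).filter (fun s => x s = 1)).card : ℝ) := by
        rw [← Finset.sum_boole]
        refine Finset.sum_congr rfl fun s hs => ?_
        rcases hbin s (Finset.ne_of_mem_erase hs) with h | h <;> simp [h]
      set m := ((univ.erase t).filter (fun s => x s = 1)).card with hm
      have hmsum : (m : ℝ) + x t ≤ (Γ : ℝ) := by
        rw [← hS, Finset.sum_erase_add _ _ (mem_univ t)]; exact hsum
      have hmlt : m < Γ := by
        have : (m : ℝ) < (Γ : ℝ) := by linarith
        exact_mod_cast this
      have hm1 : (m : ℝ) + 1 ≤ (Γ : ℝ) := by exact_mod_cast hmlt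
      set v : ℝ := if g t 0 ≤ g t 1 then (1:ℝ) else 0 with hv
      have hv01 : v = 0 ∨ v = 1 := by rw [hv]; split <;> simp
      have hgv : g t (x t) ≤ g t v := by
        have hcvx := (hg t).2 (Set.mem_Icc.mpr ⟨le_refl 0, zero_le_one⟩)
          (Set.mem_Icc.mpr ⟨zero_le_one, le_refl 1⟩)
          (show (0:ℝ) ≤ 1 - x t by linarith) (le_of_lt hbt0)
          (show (1 - x t) + x t = 1 by ring)
        simp only [smul_eq_mul, mul_zero, mul_one, zero_add] at hcvx
        rw [hv]; split <;> nlinarith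
      refine ⟨Function.update x t v, ?_, ?_, ?_⟩
      · intro s
        by_cases hs : s = t
        · subst hs; rw [Function.update_self]; exact hv01
        · rw [Function.update_of_ne hs]; exact hbin s hs
      · rw [Finset.sum_update_of_mem (mem_univ t), Finset.sdiff_singleton_eq_erase, hS]
        have hv1 : v ≤ 1 := by rcases hv01 with h | h <;> simp [h]
        linarith
      · rw [← Finset.sum_erase_add _ _ (mem_univ t),
            ← Finset.sum_erase_add _ (fun s => g s (Function.update x t v s)) (mem_univ t)]
        have he : ∑ s ∈ univ.erase t, g s (Function.update x t v s) =
            ∑ s ∈ univ.erase t, g s (x s) := by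
          refine Finset.sum_congr rfl fun s hs => ?_
          rw [Function.update_of_ne (Finset.ne_of_mem_erase hs)]
        rw [he, Function.update_self]
        linarith
    · -- at least two fractional coordinates: exchange argument
      push_neg at hsingle
      obtain ⟨s, hsF, hst⟩ := hsingle
      have hsm := (mem_filter.mp hsF).2
      have hbs0 : 0 < x s := lt_of_le_of_ne (hx s).1 (Ne.symm hsm.1)
      have hbs1 : x s < 1 := lt_of_le_of_ne (hx s).2 hsm.2
      set εp : ℝ := min (1 - x s) (x t) with hεp
      set εm : ℝ := min (x s) (1 - x t) with hεm
      have hεp0 : 0 < εp := lt_min (by linarith) hbt0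
      have hεm0 : 0 < εm := lt_min hbs0 (by linarith)
      have h1 : εp ≤ 1 - x s := min_le_left _ _
      have h2 : εp ≤ x t := min_le_right _ _
      have h3 : εm ≤ x s := min_le_left _ _
      have h4 : εm ≤ 1 - x t := min_le_right _ _
      set w : ℝ := εp + εm with hw
      have hwpos : 0 < w := by positivity
      set lam : ℝ := εm / w with hlam
      set mu : ℝ := εp / w with hmu
      have hlam0 : 0 ≤ lam := by positivity
      have hmu0 : 0 ≤ mu := by positivity
      have hlm : lam + mu = 1 := by
        rw [hlam, hmu, ← add_div, hw, add_comm εp εm, div_self (by positivity)]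
      have hmemsp : x s + εp ∈ Set.Icc (0:ℝ) 1 := ⟨by linarith, by linarith⟩
      have hmemsm : x s - εm ∈ Set.Icc (0:ℝ) 1 := ⟨by linarith, by linarith⟩
      have hmemtp : x t + εm ∈ Set.Icc (0:ℝ) 1 := ⟨by linarith, by linarith⟩
      have hmemtm : x t - εp ∈ Set.Icc (0:ℝ) 1 := ⟨by linarith, by linarith⟩
      have cvx_s := (hg s).2 hmemsp hmemsm hlam0 hmu0 hlm
      have cvx_t := (hg t).2 hmemtm hmemtp hlam0 hmu0 hlm
      simp only [smul_eq_mul] at cvx_s cvx_t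
      have hpt_s : lam * (x s + εp) + mu * (x s - εm) = x s := by
        rw [hlam, hmu]; field_simp; ring
      have hpt_t : lam * (x t - εp) + mu * (x t + εm) = x t := by
        rw [hlam, hmu]; field_simp; ring
      rw [hpt_s] at cvx_s
      rw [hpt_t] at cvx_t
      set A : ℝ := g s (x s + εp) + g t (x t - εp) with hA
      set B : ℝ := g s (x s - εm) + g t (x t + εm) with hB
      have key : g s (x s) + g t (x t) ≤ lam * A + mu * B := by
        have hAB : lam * A + mu * B =
            lam * g s (x s + εp) + mu * g s (x s - εm) +
              (lam * g t (x t - εp) + mu * g t (x t + εm)) := by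
          rw [hA, hB]; ring
        linarith
      -- choose the better endpoint
      rcases le_total A B with hABle | hABle
      · -- use B : va = x s - εm, vb = x t + εm
        have hselect : g s (x s) + g t (x t) ≤ g s (x s - εm) + g t (x t + εm) := by
          have h5 : lam * A ≤ lam * B := mul_le_mul_of_nonneg_left hABle hlam0
          have h6 : lam * B + mu * B = B := by rw [← add_mul, hlm, one_mul]
          rw [← hB]; linarith
        have hbinv : (x s - εm = 0 ∨ x s - εm = 1) ∨ (x t + εm = 0 ∨ x t + εm = 1) := by
          rcases min_cases (x s) (1 - x t) with ⟨h, _⟩ | ⟨h, _⟩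
          · left; left; rw [hεm, h]; ring
          · right; right; rw [hεm, h]; ring
        exact exchange_finish Γ g n ih x hx hsum hcard s t hst hsm htm
          (x s - εm) (x t + εm) ⟨hmemsm.1, hmemsm.2⟩ ⟨hmemtp.1, hmemtp.2⟩
          (by ring) hbinv hselect
      · -- use A : va = x s + εp, vb = x t - εp
        have hselect : g s (x s) + g t (x t) ≤ g s (x s + εp) + g t (x t - εp) := by
          have h5 : mu * B ≤ mu * A := mul_le_mul_of_nonneg_left hABle hmu0
          have h6 : lam * A + mu * A = A := by rw [← add_mul, hlm, one_mul]
          rw [← hA]; linarith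
        have hbinv : (x s + εp = 0 ∨ x s + εp = 1) ∨ (x t - εp = 0 ∨ x t - εp = 1) := by
          rcases min_cases (1 - x s) (x t) with ⟨h, _⟩ | ⟨h, _⟩
          · left; right; rw [hεp, h]; ring
          · right; left; rw [hεp, h]; ring
        exact exchange_finish Γ g n ih x hx hsum hcard s t hst hsm htm
          (x s + εp) (x t - εp) ⟨hmemsp.1, hmemsp.2⟩ ⟨hmemtm.1, hmemtm.2⟩
          (by ring) hbinv hselect

/-- Key step: any relaxed scenario is dominated by a binary scenario. -/
lemma key_round (T ΓA ΓD : ℕ) (Alo ΔA : Fin T → ℝ)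
    (hΔA : ∀ t, 0 ≤ ΔA t) (hA : ∀ t, Alo t + ΔA t < 360)
    (Φd Ψd : Fin T → ℝ) (α γ : Fin T → ℝ) (h : inAR T ΓA ΓD (α, γ)) :
    ∃ p' : (Fin T → ℝ) × (Fin T → ℝ), inARB T ΓA ΓD p' ∧
      ∑ t, (γ t * Φd t + Ψd t) / (1.2 - (Alo t + α t * ΔA t) / 300) ≤
      ∑ t, (p'.2 t * Φd t + Ψd t) / (1.2 - (Alo t + p'.1 t * ΔA t) / 300) := by
  classical
  obtain ⟨hα, hγ, hsα, hsγ⟩ := h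
  have hcardT : ∀ x : Fin T → ℝ,
      (univ.filter (fun t => x t ≠ 0 ∧ x t ≠ 1)).card ≤ T := by
    intro x
    calc (univ.filter (fun t => x t ≠ 0 ∧ x t ≠ 1)).card
        ≤ (univ : Finset (Fin T)).card := Finset.card_filter_le _ _
      _ = T := by simp
  have hdeq : ∀ t : Fin T, ∀ u : ℝ,
      1.2 - (Alo t + u * ΔA t) / 300 = (1.2 - Alo t / 300) - u * (ΔA t / 300) := by
    intro t u; ring
  have hBb : ∀ t : Fin T, 0 ≤ ΔA t / 300 := fun t => by
    have := hΔA t; positivity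
  have hABpos : ∀ t : Fin T, 0 < (1.2 - Alo t / 300) - ΔA t / 300 := by
    intro t; have := hA t; norm_num; linarith
  -- Step 1: round γ with α fixed (objective affine in γ)
  set g1 : Fin T → ℝ → ℝ :=
    fun t u => (u * Φd t + Ψd t) / (1.2 - (Alo t + α t * ΔA t) / 300) with hg1def
  have hg1 : ∀ t, ConvexOn ℝ (Set.Icc (0:ℝ) 1) (g1 t) := by
    intro t
    have he : g1 t = fun u =>
        u * (Φd t / (1.2 - (Alo t + α t * ΔA t) / 300)) +
          Ψd t / (1.2 - (Alo t + α t * ΔA t) / 300) := by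
      funext u; rw [hg1def]; dsimp only
      rw [add_div (u * Φd t) (Ψd t), mul_div_assoc]
    rw [he]
    exact convexOn_affine_aux _ _
  obtain ⟨γ', hγ'bin, hγ'sum, hγ'obj⟩ := round_lemma ΓD g1 hg1 T γ (hcardT γ) hγ hsγ
  have hγ'bd : ∀ t, 0 ≤ γ' t ∧ γ' t ≤ 1 := by
    intro t; rcases hγ'bin t with h | h <;> rw [h] <;> norm_num
  -- Step 2: round α with γ' fixed
  set c : Fin T → ℝ := fun t => γ' t * Φd t + Ψd t with hcdef
  set g2 : Fin T → ℝ → ℝ :=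
    fun t u => c t / (1.2 - (Alo t + u * ΔA t) / 300) with hg2def
  set g2' : Fin T → ℝ → ℝ :=
    fun t u => if c t < 0 then g2 t 0 else g2 t u with hg2'def
  have hg2' : ∀ t, ConvexOn ℝ (Set.Icc (0:ℝ) 1) (g2' t) := by
    intro t
    by_cases hct : c t < 0
    · have he : g2' t = fun _ => g2 t 0 := by funext u; rw [hg2'def]; simp [hct]
      rw [he]
      exact convexOn_const _ (convex_Icc _ _)
    · have he : g2' t = fun u => c t / ((1.2 - Alo t / 300) - u * (ΔA t / 300)) := by
        funext u; rw [hg2'def]; simp [hct, hg2def, hdeq t u]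
      rw [he]
      exact convexOn_div_affine_aux _ _ _ (not_lt.mp hct) (hBb t) (hABpos t)
  obtain ⟨y, hybin, hysum, hyobj⟩ := round_lemma ΓA g2' hg2' T α (hcardT α) hα hsα
  set y' : Fin T → ℝ := fun t => if c t < 0 then 0 else y t with hy'def
  have hy'bin : ∀ t, y' t = 0 ∨ y' t = 1 := by
    intro t; rw [hy'def]; dsimp only; split
    · exact Or.inl rfl
    · exact hybin t
  have hy'sum : ∑ t, y' t ≤ (ΓA : ℝ) := by
    refine le_trans (Finset.sum_le_sum fun t _ => ?_) hysum
    rw [hy'def]; dsimp only; split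
    · rcases hybin t with h | h <;> rw [h] <;> norm_num
    · exact le_refl _
  -- comparisons
  have hcmp1 : ∀ t, g2 t (α t) ≤ g2' t (α t) := by
    intro t
    rw [hg2'def]; dsimp only; split
    · rw [hg2def]; dsimp only
      rw [hdeq t (α t), hdeq t 0]
      exact neg_coeff_aux _ _ _ _ (by assumption) (hBb t) (hABpos t) (hα t).1 (hα t).2
    · exact le_refl _
  have hcmp2 : ∀ t, g2' t (y t) = g2 t (y' t) := by
    intro t
    rw [hg2'def, hy'def]; dsimp only; split
    · rfl
    · rfl
  have hchain : ∑ t, g2 t (α t) ≤ ∑ t, g2 t (y' t) := by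
    calc ∑ t, g2 t (α t) ≤ ∑ t, g2' t (α t) := Finset.sum_le_sum fun t _ => hcmp1 t
      _ ≤ ∑ t, g2' t (y t) := hyobj
      _ = ∑ t, g2 t (y' t) := Finset.sum_congr rfl fun t _ => hcmp2 t
  refine ⟨(y', γ'), ⟨⟨?_, ?_, hy'sum, hγ'sum⟩, hy'bin, hγ'bin⟩, ?_⟩
  · intro t; rcases hy'bin t with h | h <;> simp [h]
  · exact hγ'bd
  · calc ∑ t, (γ t * Φd t + Ψd t) / (1.2 - (Alo t + α t * ΔA t) / 300)
        = ∑ t, g1 t (γ t) := rfl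
      _ ≤ ∑ t, g1 t (γ' t) := hγ'obj
      _ = ∑ t, g2 t (α t) := rfl
      _ ≤ ∑ t, g2 t (y' t) := hchain
      _ = ∑ t, (γ' t * Φd t + Ψd t) / (1.2 - (Alo t + y' t * ΔA t) / 300) := rfl

/-- Theorem 1 (analytical core): W*(𝔸^R) = W*(𝔸^{RB}). -/
theorem stmt_11 (T ΓA ΓD : ℕ) (Alo ΔA : Fin T → ℝ)
    (hΔA : ∀ t, 0 ≤ ΔA t) (hA : ∀ t, Alo t + ΔA t < 360)
    {D : Type*} [Nonempty D] (Ξ : D → ℝ) (Φ Ψ : D → Fin T → ℝ)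
    (Obj : D → ((Fin T → ℝ) × (Fin T → ℝ)) → ℝ)
    (hObj : ∀ d p, Obj d p =
      Ξ d + ∑ t, (p.2 t * Φ d t + Ψ d t) / (1.2 - (Alo t + p.1 t * ΔA t) / 300))
    (hbdd : BddAbove {z : ℝ | ∃ d p, inAR T ΓA ΓD p ∧ Obj d p = z}) :
    sSup {z : ℝ | ∃ d p, inAR T ΓA ΓD p ∧ Obj d p = z} =
      sSup {z : ℝ | ∃ d p, inARB T ΓA ΓD p ∧ Obj d p = z} := by
  classical
  set S1 := {z : ℝ | ∃ d p, inAR T ΓA ΓD p ∧ Obj d p = z} with hS1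
  set S2 := {z : ℝ | ∃ d p, inARB T ΓA ΓD p ∧ Obj d p = z} with hS2
  have d0 : D := Classical.arbitrary D
  have hp0 : inARB T ΓA ΓD (fun _ => 0, fun _ => 0) := by
    refine ⟨⟨fun t => ⟨le_refl _, zero_le_one⟩, fun t => ⟨le_refl _, zero_le_one⟩, ?_, ?_⟩,
      fun t => Or.inl rfl, fun t => Or.inl rfl⟩ <;> simp
  have hne2 : S2.Nonempty := ⟨Obj d0 _, d0, _, hp0, rfl⟩
  have hsub : S2 ⊆ S1 := by
    rintro z ⟨d, p, hp, he⟩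
    exact ⟨d, p, hp.1, he⟩
  have hbdd2 : BddAbove S2 := hbdd.mono hsub
  have hne1 : S1.Nonempty := hne2.mono hsub
  apply le_antisymm
  · refine csSup_le hne1 ?_
    rintro z ⟨d, ⟨α, γ⟩, hp, rfl⟩
    obtain ⟨p', hp', hle⟩ := key_round T ΓA ΓD Alo ΔA hΔA hA (Φ d) (Ψ d) α γ hp
    have hOle : Obj d (α, γ) ≤ Obj d p' := by
      rw [hObj d (α, γ), hObj d p']
      exact add_le_add (le_refl _) hle
    exact hOle.trans (le_csSup hbdd2 ⟨d, p', hp', rfl⟩)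
  · exact csSup_le_csSup hbdd hne2 hsub
end

section
/- Define f : ℝ → ℝ by f(a) := 1/(1.2 − a/300). Let Ψ₁, Ψ₂, Δ, a₁, a₂ ∈ ℝ with Ψ₁ > 0, Ψ₂ > 0, Δ > 0, a₁ + Δ < 360, a₂ + Δ < 360, and a₂ + Δ ≥ a₁. If Ψ₁·(f(a₁ + Δ) − f(a₁)) ≥ Ψ₂·(f(a₂ + Δ) − f(a₂)), then Ψ₁·f(a₁ + Δ) ≥ Ψ₂·f(a₂). -/
private lemma aux_id (x y c : ℝ) (hx : x ≠ 0) (hy : y ≠ 0) (h : x - y = c) :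
    1 / y - 1 / x = c * (1 / x * 1 / y) := by
  subst h
  field_simp

/-- Key inequality in the proof of Theorem 2. -/
theorem stmt_12 (Ψ₁ Ψ₂ Δ a₁ a₂ : ℝ)
    (hΨ₁ : 0 < Ψ₁) (hΨ₂ : 0 < Ψ₂) (hΔ : 0 < Δ)
    (h₁ : a₁ + Δ < 360) (h₂ : a₂ + Δ < 360) (h₁₂ : a₁ ≤ a₂ + Δ)
    (f : ℝ → ℝ) (hf : ∀ a, f a = 1 / (1.2 - a / 300))
    (hgain : Ψ₂ * (f (a₂ + Δ) - f a₂) ≤ Ψ₁ * (f (a₁ + Δ) - f a₁)) :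
    Ψ₂ * f a₂ ≤ Ψ₁ * f (a₁ + Δ) := by
  have d1 : (0:ℝ) < 1.2 - a₁ / 300 := by norm_num; linarith
  have d1' : (0:ℝ) < 1.2 - (a₁ + Δ) / 300 := by norm_num; linarith
  have d2 : (0:ℝ) < 1.2 - a₂ / 300 := by norm_num; linarith
  have d2' : (0:ℝ) < 1.2 - (a₂ + Δ) / 300 := by norm_num; linarith
  have n1 : (1.2 - a₁ / 300) ≠ 0 := ne_of_gt d1
  have n1' : (1.2 - (a₁ + Δ) / 300) ≠ 0 := ne_of_gt d1'
  have n2 : (1.2 - a₂ / 300) ≠ 0 := ne_of_gt d2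
  have n2' : (1.2 - (a₂ + Δ) / 300) ≠ 0 := ne_of_gt d2'
  have m1 : (360 - a₁ : ℝ) ≠ 0 := by linarith
  have m1' : (360 + (-a₁ - Δ) : ℝ) ≠ 0 := by intro h; linarith
  have m2 : (360 - a₂ : ℝ) ≠ 0 := by linarith
  have m2' : (360 + (-a₂ - Δ) : ℝ) ≠ 0 := by intro h; linarith
  simp only [hf] at hgain ⊢
  have u1 : (0:ℝ) < 1 / (1.2 - a₁ / 300) := by positivity
  have u1' : (0:ℝ) < 1 / (1.2 - (a₁ + Δ) / 300) := by positivity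
  have u2 : (0:ℝ) < 1 / (1.2 - a₂ / 300) := by positivity
  have u2' : (0:ℝ) < 1 / (1.2 - (a₂ + Δ) / 300) := by positivity
  have id1 : 1 / (1.2 - (a₁ + Δ) / 300) - 1 / (1.2 - a₁ / 300)
      = (Δ / 300) * ((1 / (1.2 - a₁ / 300)) * (1 / (1.2 - (a₁ + Δ) / 300))) := by
    have := aux_id (1.2 - a₁ / 300) (1.2 - (a₁ + Δ) / 300) (Δ / 300) n1 n1' (by ring)
    rw [this]; ring
  have id2 : 1 / (1.2 - (a₂ + Δ) / 300) - 1 / (1.2 - a₂ / 300)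
      = (Δ / 300) * ((1 / (1.2 - a₂ / 300)) * (1 / (1.2 - (a₂ + Δ) / 300))) := by
    have := aux_id (1.2 - a₂ / 300) (1.2 - (a₂ + Δ) / 300) (Δ / 300) n2 n2' (by ring)
    rw [this]; ring
  rw [id1, id2] at hgain
  have hΔ' : (0:ℝ) < Δ / 300 := by linarith
  have hprod : Ψ₂ * ((1 / (1.2 - a₂ / 300)) * (1 / (1.2 - (a₂ + Δ) / 300)))
      ≤ Ψ₁ * ((1 / (1.2 - a₁ / 300)) * (1 / (1.2 - (a₁ + Δ) / 300))) := by
    have h : (Δ / 300) * (Ψ₂ * ((1 / (1.2 - a₂ / 300)) * (1 / (1.2 - (a₂ + Δ) / 300))))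
        ≤ (Δ / 300) * (Ψ₁ * ((1 / (1.2 - a₁ / 300)) * (1 / (1.2 - (a₁ + Δ) / 300)))) := by
      linarith [hgain]
    exact le_of_mul_le_mul_left h hΔ'
  have hmono : 1 / (1.2 - a₁ / 300) ≤ 1 / (1.2 - (a₂ + Δ) / 300) := by
    apply one_div_le_one_div_of_le d2'
    linarith
  have hstep : Ψ₁ * ((1 / (1.2 - a₁ / 300)) * (1 / (1.2 - (a₁ + Δ) / 300)))
      ≤ (Ψ₁ * (1 / (1.2 - (a₁ + Δ) / 300))) * (1 / (1.2 - (a₂ + Δ) / 300)) := by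
    have := mul_le_mul_of_nonneg_left hmono (le_of_lt (mul_pos hΨ₁ u1'))
    nlinarith [this]
  have hchain : (Ψ₂ * (1 / (1.2 - a₂ / 300))) * (1 / (1.2 - (a₂ + Δ) / 300))
      ≤ (Ψ₁ * (1 / (1.2 - (a₁ + Δ) / 300))) * (1 / (1.2 - (a₂ + Δ) / 300)) := by
    calc (Ψ₂ * (1 / (1.2 - a₂ / 300))) * (1 / (1.2 - (a₂ + Δ) / 300))
        = Ψ₂ * ((1 / (1.2 - a₂ / 300)) * (1 / (1.2 - (a₂ + Δ) / 300))) := by ring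
      _ ≤ Ψ₁ * ((1 / (1.2 - a₁ / 300)) * (1 / (1.2 - (a₁ + Δ) / 300))) := hprod
      _ ≤ (Ψ₁ * (1 / (1.2 - (a₁ + Δ) / 300))) * (1 / (1.2 - (a₂ + Δ) / 300)) := hstep
  exact le_of_mul_le_mul_right hchain u2'
end

section
/- Fix T ∈ ℕ and integer budgets Γ^A, Γ^D ∈ ℕ. Let A̲, ΔA : Fin T → ℝ satisfy ΔA_t ≥ 0 and A̲_t + ΔA_t < 360 for all t, fix a lag l ∈ ℕ, and define 𝔸 := {(α,γ) : 0 ≤ α_t ≤ 1 and 0 ≤ γ_t ≤ 1 for all t, Σ_t α_t ≤ Γ^A, Σ_t γ_t ≤ Γ^D, and Σ_{τ=t}^{t+l} γ_τ ≥ α_t for every t with t + l ≤ T − 1}, 𝔸^R := the same set without the correlation constraints, and 𝔸^{RB} := {(α,γ) ∈ 𝔸^R : every α_t and γ_t equals 0 or 1}. Let Y be a nonempty finite set, f : Y → ℝ, let D be a nonempty set, and for each y ∈ Y let Ξ_y : D → ℝ and Φ_y, Ψ_y : D → (Fin T → ℝ), with Obj_y(d,α,γ) := Ξ_y(d) + Σ_t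 (γ_t·Φ_y(d)_t + Ψ_y(d)_t)/(1.2 − (A̲_t + α_t·ΔA_t)/300). Assume for every y ∈ Y that {Obj_y(d,α,γ) : d ∈ D, (α,γ) ∈ 𝔸^R} is bounded above, and define V(𝕌) := min over y ∈ Y of ( f(y) + sup{Obj_y(d,α,γ) : d ∈ D, (α,γ) ∈ 𝕌} ). Then V(𝔸) ≤ V(𝔸^R) = V(𝔸^{RB}). -/
open Finset

/-- The uncertainty set 𝔸 in deviation coordinates. -/
def inA (T l ΓA ΓD : ℕ) (p : (Fin T → ℝ) × (Fin T → ℝ)) : Prop :=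
  (∀ t, 0 ≤ p.1 t ∧ p.1 t ≤ 1) ∧ (∀ t, 0 ≤ p.2 t ∧ p.2 t ≤ 1) ∧
  (∑ t, p.1 t ≤ (ΓA : ℝ)) ∧ (∑ t, p.2 t ≤ (ΓD : ℝ)) ∧
  (∀ t : Fin T, (t : ℕ) + l ≤ T - 1 →
    p.1 t ≤ ∑ τ ∈ univ.filter (fun τ : Fin T => (t : ℕ) ≤ (τ : ℕ) ∧ (τ : ℕ) ≤ (t : ℕ) + l), p.2 τ)

lemma cvx_aux (c e a : ℝ) (he : 0 ≤ e) (h1 : 0 < c - e) (ha0 : 0 ≤ a) (ha1 : a ≤ 1) :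
    (c - a * e)⁻¹ ≤ c⁻¹ + a * ((c - e)⁻¹ - c⁻¹) := by
  have h0 : 0 < c := by nlinarith
  have hda : 0 < c - a * e := by nlinarith
  have key : c⁻¹ + a * ((c - e)⁻¹ - c⁻¹) - (c - a * e)⁻¹
      = (a * (1 - a) * e ^ 2) / (c * (c - e) * (c - a * e)) := by
    field_simp
    ring
  have hnum : 0 ≤ a * (1 - a) * e ^ 2 :=
    mul_nonneg (mul_nonneg ha0 (by linarith)) (sq_nonneg _)
  have hpos : 0 < c * (c - e) * (c - a * e) := mul_pos (mul_pos h0 h1) hda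
  nlinarith [div_nonneg hnum hpos.le]

lemma select {ι : Type*} [DecidableEq ι] :
    ∀ (N : ℕ) (s : Finset ι) (w x : ι → ℝ),
      (∀ t ∈ s, 0 ≤ x t ∧ x t ≤ 1) → (∑ t ∈ s, x t ≤ N) →
      ∃ K ⊆ s, K.card ≤ N ∧ ∑ t ∈ s, w t * x t ≤ ∑ t ∈ K, w t := by
  intro N
  induction N with
  | zero =>
    intro s w x hx hsum
    refine ⟨∅, Finset.empty_subset _, le_refl 0, ?_⟩
    have hx0 : ∀ t ∈ s, x t = 0 := by
      have h0 : ∑ t ∈ s, x t = 0 :=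
        le_antisymm (by simpa using hsum) (Finset.sum_nonneg fun t ht => (hx t ht).1)
      exact fun t ht => (Finset.sum_eq_zero_iff_of_nonneg (fun t ht => (hx t ht).1)).1 h0 t ht
    rw [Finset.sum_empty]
    exact le_of_eq (Finset.sum_eq_zero fun t ht => by rw [hx0 t ht, mul_zero])
  | succ N ih =>
    intro s w x hx hsum
    rcases s.eq_empty_or_nonempty with rfl | hs
    · exact ⟨∅, by simp, by simp, by simp⟩
    obtain ⟨i, hi, hmax⟩ := s.exists_max_image w hs
    by_cases hwi : w i ≤ 0
    · refine ⟨∅, Finset.empty_subset _, by simp, ?_⟩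
      rw [Finset.sum_empty]
      exact Finset.sum_nonpos fun t ht =>
        mul_nonpos_of_nonpos_of_nonneg ((hmax t ht).trans hwi) (hx t ht).1
    push_neg at hwi
    have hsplit : ∀ f : ι → ℝ, ∑ t ∈ s, f t = f i + ∑ t ∈ s.erase i, f t := fun f =>
      (Finset.add_sum_erase s f hi).symm
    by_cases hσ : ∑ t ∈ s.erase i, x t ≤ N
    · obtain ⟨K', hK's, hK'c, hK'⟩ := ih (s.erase i) w x
        (fun t ht => hx t (Finset.mem_of_mem_erase ht)) hσ
      have hiK' : i ∉ K' := fun h => (Finset.notMem_erase i s) (hK's h)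
      refine ⟨insert i K', Finset.insert_subset hi (hK's.trans (Finset.erase_subset _ _)), ?_, ?_⟩
      · calc (insert i K').card ≤ K'.card + 1 := Finset.card_insert_le _ _
          _ ≤ N + 1 := by omega
      · rw [Finset.sum_insert hiK', hsplit (fun t => w t * x t)]
        have : w i * x i ≤ w i := by nlinarith [(hx i hi).1, (hx i hi).2]
        linarith
    · push_neg at hσ
      have hσ0 : (0:ℝ) < ∑ t ∈ s.erase i, x t := lt_of_le_of_lt (Nat.cast_nonneg N) hσ
      set σ := ∑ t ∈ s.erase i, x t with hσdef
      set lam := (N : ℝ) / σ with hlam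
      have hlam0 : 0 ≤ lam := div_nonneg (Nat.cast_nonneg N) hσ0.le
      have hlam1 : lam ≤ 1 := (div_le_one hσ0).2 hσ.le
      have hxb : ∀ t ∈ s.erase i, 0 ≤ lam * x t ∧ lam * x t ≤ 1 := by
        intro t ht
        have h := hx t (Finset.mem_of_mem_erase ht)
        exact ⟨mul_nonneg hlam0 h.1, le_trans (mul_le_of_le_one_left h.1 hlam1) h.2⟩
      have hbud : ∑ t ∈ s.erase i, lam * x t ≤ (N:ℝ) := by
        rw [← Finset.mul_sum, ← hσdef, hlam, div_mul_cancel₀ _ hσ0.ne']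
      obtain ⟨K', hK's, hK'c, hK'⟩ := ih (s.erase i) w (fun t => lam * x t) hxb hbud
      have hiK' : i ∉ K' := fun h => (Finset.notMem_erase i s) (hK's h)
      refine ⟨insert i K', Finset.insert_subset hi (hK's.trans (Finset.erase_subset _ _)), ?_, ?_⟩
      · calc (insert i K').card ≤ K'.card + 1 := Finset.card_insert_le _ _
          _ ≤ N + 1 := by omega
      · rw [Finset.sum_insert hiK', hsplit (fun t => w t * x t)]
        have hkey : ∑ t ∈ s.erase i, w t * x t
            ≤ w i * (1 - lam) * σ + ∑ t ∈ s.erase i, w t * (lam * x t) := by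
          rw [hσdef, Finset.mul_sum, ← Finset.sum_add_distrib]
          refine Finset.sum_le_sum fun t ht => ?_
          have h := hx t (Finset.mem_of_mem_erase ht)
          have hw := hmax t (Finset.mem_of_mem_erase ht)
          nlinarith [mul_nonneg (mul_nonneg (sub_nonneg.2 hw) (sub_nonneg.2 hlam1)) h.1]
        have hlamσ : lam * σ = (N:ℝ) := by rw [hlam, div_mul_cancel₀ _ hσ0.ne']
        have hxi := hx i hi
        have hs2 : x i + σ ≤ (N:ℝ) + 1 := by
          have := hsum; rw [hsplit x] at this; push_cast at this ⊢; linarith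
        nlinarith [hK']

/-- Corollary 2 (abstract form): V(𝔸) ≤ V(𝔸^R) = V(𝔸^{RB}). -/
theorem stmt_15 (T l ΓA ΓD : ℕ) (Alo ΔA : Fin T → ℝ)
    (hΔA : ∀ t, 0 ≤ ΔA t) (hA : ∀ t, Alo t + ΔA t < 360)
    {Y : Type*} [Fintype Y] [Nonempty Y] (f : Y → ℝ)
    {D : Type*} [Nonempty D] (Ξ : Y → D → ℝ) (Φ Ψ : Y → D → Fin T → ℝ)
    (Obj : Y → D → ((Fin T → ℝ) × (Fin T → ℝ)) → ℝ)
    (hObj : ∀ y d p, Obj y d p =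
      Ξ y d + ∑ t, (p.2 t * Φ y d t + Ψ y d t) / (1.2 - (Alo t + p.1 t * ΔA t) / 300))
    (hbdd : ∀ y : Y, BddAbove {z : ℝ | ∃ d p, inAR T ΓA ΓD p ∧ Obj y d p = z}) :
    (⨅ y : Y, (f y + sSup {z : ℝ | ∃ d p, inA T l ΓA ΓD p ∧ Obj y d p = z})) ≤
      (⨅ y : Y, (f y + sSup {z : ℝ | ∃ d p, inAR T ΓA ΓD p ∧ Obj y d p = z})) ∧
    (⨅ y : Y, (f y + sSup {z : ℝ | ∃ d p, inAR T ΓA ΓD p ∧ Obj y d p = z})) =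
      (⨅ y : Y, (f y + sSup {z : ℝ | ∃ d p, inARB T ΓA ΓD p ∧ Obj y d p = z})) := by
  classical
  set g : Fin T → ℝ → ℝ := fun t a => (1.2 - (Alo t + a * ΔA t) / 300)⁻¹ with hg
  have hden : ∀ (t : Fin T) (a : ℝ), 0 ≤ a → a ≤ 1 → 0 < 1.2 - (Alo t + a * ΔA t) / 300 := by
    intro t a ha0 ha1
    have h1 : a * ΔA t ≤ ΔA t := by nlinarith [hΔA t]
    have h2 := hA t
    linarith
  have hObj' : ∀ y d (p : (Fin T → ℝ) × (Fin T → ℝ)),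
      Obj y d p = Ξ y d + ∑ t, (p.2 t * Φ y d t + Ψ y d t) * g t (p.1 t) := by
    intro y d p
    rw [hObj]
    simp only [div_eq_mul_inv, hg]
  have hmono : ∀ (t : Fin T) (a : ℝ), 0 ≤ a → a ≤ 1 → g t 0 ≤ g t a := by
    intro t a ha0 ha1
    have hda := hden t a ha0 ha1
    have hle : 1.2 - (Alo t + a * ΔA t) / 300 ≤ 1.2 - (Alo t + 0 * ΔA t) / 300 := by
      have := mul_nonneg ha0 (hΔA t); linarith
    exact inv_anti₀ hda hle
  have hcvx : ∀ (t : Fin T) (a : ℝ), 0 ≤ a → a ≤ 1 →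
      g t a ≤ g t 0 + a * (g t 1 - g t 0) := by
    intro t a ha0 ha1
    have hd1 := hden t 1 zero_le_one le_rfl
    have hrw : ∀ b : ℝ, 1.2 - (Alo t + b * ΔA t) / 300
        = (1.2 - Alo t / 300) - b * (ΔA t / 300) := by intro b; ring
    simp only [hg, hrw]
    have he : 0 ≤ ΔA t / 300 := div_nonneg (hΔA t) (by norm_num)
    have h1 : 0 < (1.2 - Alo t / 300) - ΔA t / 300 := by
      have h := hd1; rw [hrw 1, one_mul] at h; exact h
    have := cvx_aux (1.2 - Alo t / 300) (ΔA t / 300) a he h1 ha0 ha1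
    simpa [zero_mul, sub_zero, one_mul] using this
  -- improvement step
  have improve : ∀ (y : Y) (d : D) (p : (Fin T → ℝ) × (Fin T → ℝ)), inAR T ΓA ΓD p →
      ∃ q, inARB T ΓA ΓD q ∧ Obj y d p ≤ Obj y d q := by
    intro y d p hp
    obtain ⟨hα, hγ, hαs, hγs⟩ := hp
    set qc : Fin T → ℝ := fun t => p.2 t * Φ y d t + Ψ y d t with hqc
    set lam : Fin T → ℝ := fun t => if 0 ≤ qc t then p.1 t else 0 with hlamdef
    set w : Fin T → ℝ := fun t => qc t * (g t 1 - g t 0) with hwdef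
    have hlb : ∀ t ∈ (univ : Finset (Fin T)), 0 ≤ lam t ∧ lam t ≤ 1 := by
      intro t _
      simp only [hlamdef]
      split
      · exact hα t
      · exact ⟨le_rfl, zero_le_one⟩
    have hlsum : ∑ t, lam t ≤ (ΓA : ℝ) := by
      refine le_trans (Finset.sum_le_sum fun t _ => ?_) hαs
      simp only [hlamdef]
      split
      · exact le_rfl
      · exact (hα t).1
    obtain ⟨KA, -, hKAc, hKA⟩ := select ΓA univ w lam hlb hlsum
    set α' : Fin T → ℝ := fun t => if t ∈ KA then 1 else 0 with hα'def
    have hα'mem : ∀ t, 0 ≤ α' t ∧ α' t ≤ 1 := by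
      intro t; simp only [hα'def]; split
      · exact ⟨zero_le_one, le_rfl⟩
      · exact ⟨le_rfl, zero_le_one⟩
    have hα'sum : ∑ t, α' t ≤ (ΓA : ℝ) := by
      have : ∑ t, α' t = (KA.card : ℝ) := by
        simp only [hα'def]
        rw [Finset.sum_ite_mem, Finset.univ_inter, Finset.sum_const, nsmul_eq_mul, mul_one]
      rw [this]
      exact_mod_cast hKAc
    have stepA : ∑ t, qc t * g t (p.1 t) ≤ ∑ t, qc t * g t (α' t) := by
      have hptwise : ∀ t ∈ (univ : Finset (Fin T)),
          qc t * g t (p.1 t) ≤ qc t * g t 0 + w t * lam t := by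
        intro t _
        by_cases hq : 0 ≤ qc t
        · have h1 := hcvx t (p.1 t) (hα t).1 (hα t).2
          have h2 := mul_le_mul_of_nonneg_left h1 hq
          simp only [hlamdef, if_pos hq, hwdef]
          calc qc t * g t (p.1 t) ≤ qc t * (g t 0 + p.1 t * (g t 1 - g t 0)) := h2
            _ = qc t * g t 0 + qc t * (g t 1 - g t 0) * p.1 t := by ring
        · push_neg at hq
          have h1 := hmono t (p.1 t) (hα t).1 (hα t).2
          have h2 := mul_le_mul_of_nonpos_left h1 hq.le
          simp only [hlamdef, if_neg (not_le.2 hq)]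
          simpa using h2
      calc ∑ t, qc t * g t (p.1 t) ≤ ∑ t, (qc t * g t 0 + w t * lam t) :=
            Finset.sum_le_sum hptwise
        _ = ∑ t, qc t * g t 0 + ∑ t, w t * lam t := Finset.sum_add_distrib
        _ ≤ ∑ t, qc t * g t 0 + ∑ t ∈ KA, w t := add_le_add_right hKA _
        _ = ∑ t, qc t * g t 0 + ∑ t, (if t ∈ KA then w t else 0) := by
            rw [Finset.sum_ite_mem, Finset.univ_inter]
        _ = ∑ t, (qc t * g t 0 + (if t ∈ KA then w t else 0)) := Finset.sum_add_distrib.symm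
        _ = ∑ t, qc t * g t (α' t) := by
            refine Finset.sum_congr rfl fun t _ => ?_
            by_cases h : t ∈ KA
            · simp only [hα'def, if_pos h, hwdef]; ring
            · simp only [hα'def, if_neg h, add_zero]
    -- step B
    set v : Fin T → ℝ := fun t => Φ y d t * g t (α' t) with hvdef
    obtain ⟨KD, -, hKDc, hKD⟩ := select ΓD univ v p.2 (fun t _ => hγ t) hγs
    set γ' : Fin T → ℝ := fun t => if t ∈ KD then 1 else 0 with hγ'def
    have hγ'mem : ∀ t, 0 ≤ γ' t ∧ γ' t ≤ 1 := by
      intro t; simp only [hγ'def]; split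
      · exact ⟨zero_le_one, le_rfl⟩
      · exact ⟨le_rfl, zero_le_one⟩
    have hγ'sum : ∑ t, γ' t ≤ (ΓD : ℝ) := by
      have : ∑ t, γ' t = (KD.card : ℝ) := by
        simp only [hγ'def]
        rw [Finset.sum_ite_mem, Finset.univ_inter, Finset.sum_const, nsmul_eq_mul, mul_one]
      rw [this]
      exact_mod_cast hKDc
    have stepB : ∑ t, (p.2 t * Φ y d t + Ψ y d t) * g t (α' t)
        ≤ ∑ t, (γ' t * Φ y d t + Ψ y d t) * g t (α' t) := by
      have e1 : ∀ x : Fin T → ℝ, ∑ t, (x t * Φ y d t + Ψ y d t) * g t (α' t)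
          = ∑ t, Ψ y d t * g t (α' t) + ∑ t, v t * x t := by
        intro x
        rw [← Finset.sum_add_distrib]
        refine Finset.sum_congr rfl fun t _ => ?_
        simp only [hvdef]; ring
      rw [e1 p.2, e1 γ']
      refine add_le_add_right ?_ _
      have : ∑ t, v t * γ' t = ∑ t ∈ KD, v t := by
        have e2 : ∑ t, v t * γ' t = ∑ t, (if t ∈ KD then v t else 0) := by
          refine Finset.sum_congr rfl fun t _ => ?_
          simp only [hγ'def]
          split <;> simp
        rw [e2, Finset.sum_ite_mem, Finset.univ_inter]
      rw [this]
      exact hKD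
    refine ⟨(α', γ'), ⟨⟨hα'mem, hγ'mem, hα'sum, hγ'sum⟩, ?_, ?_⟩, ?_⟩
    · intro t; simp only [hα'def]; split
      · exact Or.inr rfl
      · exact Or.inl rfl
    · intro t; simp only [hγ'def]; split
      · exact Or.inr rfl
      · exact Or.inl rfl
    · rw [hObj' y d p, hObj' y d (α', γ')]
      have stepA' : ∑ t, (p.2 t * Φ y d t + Ψ y d t) * g t (p.1 t)
          ≤ ∑ t, (p.2 t * Φ y d t + Ψ y d t) * g t (α' t) := stepA
      simp only
      linarith [stepA', stepB]
  -- base points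
  have hp0AR : inAR T ΓA ΓD ((fun _ => (0:ℝ)), (fun _ => (0:ℝ))) :=
    ⟨fun t => ⟨le_rfl, zero_le_one⟩, fun t => ⟨le_rfl, zero_le_one⟩, by simp, by simp⟩
  have hp0A : inA T l ΓA ΓD ((fun _ => (0:ℝ)), (fun _ => (0:ℝ))) :=
    ⟨fun t => ⟨le_rfl, zero_le_one⟩, fun t => ⟨le_rfl, zero_le_one⟩, by simp, by simp,
      fun t _ => by simp⟩
  have hp0ARB : inARB T ΓA ΓD ((fun _ => (0:ℝ)), (fun _ => (0:ℝ))) :=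
    ⟨hp0AR, fun t => Or.inl rfl, fun t => Or.inl rfl⟩
  obtain ⟨d0⟩ := ‹Nonempty D›
  have hsubA : ∀ y : Y, {z : ℝ | ∃ d p, inA T l ΓA ΓD p ∧ Obj y d p = z}
      ⊆ {z : ℝ | ∃ d p, inAR T ΓA ΓD p ∧ Obj y d p = z} := by
    rintro y z ⟨d, p, ⟨h1, h2, h3, h4, -⟩, rfl⟩
    exact ⟨d, p, ⟨h1, h2, h3, h4⟩, rfl⟩
  have hsubB : ∀ y : Y, {z : ℝ | ∃ d p, inARB T ΓA ΓD p ∧ Obj y d p = z}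
      ⊆ {z : ℝ | ∃ d p, inAR T ΓA ΓD p ∧ Obj y d p = z} := by
    rintro y z ⟨d, p, hp, rfl⟩
    exact ⟨d, p, hp.1, rfl⟩
  constructor
  · refine ciInf_mono (Set.Finite.bddBelow (Set.finite_range _)) fun y => ?_
    refine add_le_add_right ?_ _
    exact csSup_le_csSup (hbdd y) ⟨Obj y d0 _, d0, _, hp0A, rfl⟩ (hsubA y)
  · refine iInf_congr fun y => ?_
    refine congrArg (f y + ·) ?_
    apply le_antisymm
    · refine csSup_le ⟨Obj y d0 _, d0, _, hp0AR, rfl⟩ ?_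
      rintro z ⟨d, p, hp, rfl⟩
      obtain ⟨q, hq, hle⟩ := improve y d p hp
      exact hle.trans (le_csSup (BddAbove.mono (hsubB y) (hbdd y)) ⟨d, q, hq, rfl⟩)
    · exact csSup_le_csSup (hbdd y) ⟨Obj y d0 _, d0, _, hp0ARB, rfl⟩ (hsubB y)
end
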